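/- Let r ≥ 2 and let C be a linear [n,k,d]_q code with k ≥ r + 2 in which every coordinate has locality r and whose minimum Hamming distance satisfies d = n − k + 2 − ⌈k/r⌉. Suppose some coordinate i has a repair set R of size exactly r with all coefficients nonzero, and some codeword of C is nonzero at coordinate i. Then there exists a linear [n−1, k−1, d]_q code whose coordinates admit a partition into a set of r coordinates each having locality r−1 and a set of n−1−r coordinates each having locality r; in particular its minimum distance d satisfies d = (n−1) − (k−1) + 2 − ⌈r/r⌉ − ⌈((k−1) − (r−1))/r⌉, i.e., the shortened code attains the two-locality Singleton bound with equality. -/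

import Mathlib

open Finset

/-- `C` is a linear `[n,k,d]_q` code over `F`: it has `F`-dimension `k` and its minimum
Hamming distance (least Hamming weight of a nonzero codeword) equals `d`. -/
def IsLinearCode (F : Type*) [Field F] [DecidableEq F] {n : ℕ}
    (C : Submodule F (Fin n → F)) (k d : ℕ) : Prop :=
  Module.finrank F C = k ∧
    (∀ c ∈ C, c ≠ 0 → d ≤ hammingNorm c) ∧
    ∃ c ∈ C, c ≠ 0 ∧ hammingNorm c = d

/-- Coordinate `i` of the code `C` has locality `r`. -/
def HasLocality (F : Type*) [Field F] {n : ℕ} (C : Submodule F (Fin n → F))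
    (i : Fin n) (r : ℕ) : Prop :=
  ∃ R : Finset (Fin n), i ∉ R ∧ R.card ≤ r ∧
    ∃ lam : Fin n → F, ∀ c ∈ C, c i = ∑ j ∈ R, lam j * c j

/-- Coordinate `i` of the code `C` has locality `r` with a repair set contained in `S`. -/
def HasLocalityIn (F : Type*) [Field F] {n : ℕ} (C : Submodule F (Fin n → F))
    (i : Fin n) (r : ℕ) (S : Finset (Fin n)) : Prop :=
  ∃ R : Finset (Fin n), R ⊆ S ∧ i ∉ R ∧ R.card ≤ r ∧
    ∃ lam : Fin n → F, ∀ c ∈ C, c i = ∑ j ∈ R, lam j * c j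

/-- `H(I)`: the `F`-dimension of the image of `C` under the coordinate projection onto `I`. -/
noncomputable def projDim (F : Type*) [Field F] {n : ℕ}
    (C : Submodule F (Fin n → F)) (I : Finset (Fin n)) : ℕ :=
  Module.finrank F (C.map (LinearMap.funLeft F F (fun i : {x // x ∈ I} => (i : Fin n))))

/-- `k_opt^{(q)}(n,d)`: the largest dimension of a linear code of length `n` over `F`
with minimum Hamming distance at least `d`. -/
noncomputable def kopt (F : Type*) [Field F] [DecidableEq F] (n d : ℕ) : ℕ :=
  sSup {k | ∃ C : Submodule F (Fin n → F), Module.finrank F C = k ∧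
    ∀ c ∈ C, c ≠ 0 → d ≤ hammingNorm c}


open Finset Module

namespace LRCAux

variable {F : Type*} [Field F] {N : ℕ}

/-- Projection of a vector onto the coordinates in `J` (zero elsewhere). -/
noncomputable def maskMap (F : Type*) [Field F] {N : ℕ} (J : Finset (Fin N)) :
    (Fin N → F) →ₗ[F] (Fin N → F) :=
  LinearMap.pi (fun x => if x ∈ J then LinearMap.proj x else 0)

@[simp] lemma maskMap_apply (J : Finset (Fin N)) (c : Fin N → F) (x : Fin N) :
    maskMap F J c x = if x ∈ J then c x else 0 := by
  rw [maskMap, LinearMap.pi_apply]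
  split_ifs <;> simp

/-- The rank of the code `D` projected to the coordinate set `J`. -/
noncomputable def rho (D : Submodule F (Fin N → F)) (J : Finset (Fin N)) : ℕ :=
  Module.finrank F (D.map (maskMap F J))

variable (D : Submodule F (Fin N → F))

lemma rho_mono {J J' : Finset (Fin N)} (h : J ⊆ J') : rho D J ≤ rho D J' := by
  have hcomp : (maskMap F J).comp (maskMap F J') = maskMap (N := N) F J := by
    refine LinearMap.ext fun c => funext fun x => ?_
    simp only [LinearMap.comp_apply, maskMap_apply]
    by_cases h1 : x ∈ J
    · rw [if_pos h1, if_pos h1, if_pos (h h1)]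
    · rw [if_neg h1, if_neg h1]
  have : D.map (maskMap F J) = (D.map (maskMap F J')).map (maskMap F J) := by
    rw [← Submodule.map_comp, hcomp]
  rw [rho, this]
  exact Submodule.finrank_map_le _ _

lemma rho_empty : rho D (∅ : Finset (Fin N)) = 0 := by
  have : maskMap (N := N) F ∅ = 0 := by
    refine LinearMap.ext fun c => funext fun x => ?_
    simp
  rw [rho, this, Submodule.map_zero, finrank_bot]

lemma rho_insert_le (J : Finset (Fin N)) (x : Fin N) :
    rho D (insert x J) ≤ rho D J + 1 := by
  by_cases hx : x ∈ J
  · rw [Finset.insert_eq_self.mpr hx]; omega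
  set PS : Fin N → F := Pi.single x 1 with hPS
  have hPSx : PS x = 1 := by rw [hPS]; simp
  have hPSne : ∀ y, y ≠ x → PS y = 0 := fun y hy => by rw [hPS]; exact Pi.single_eq_of_ne hy 1
  have hsing : PS ≠ 0 := by
    intro h
    have := congrFun h x
    rw [hPSx] at this
    simp at this
  have hle : D.map (maskMap F (insert x J)) ≤
      D.map (maskMap F J) ⊔ Submodule.span F {PS} := by
    rintro _ ⟨c, hc, rfl⟩
    have hdecomp : maskMap F (insert x J) c = maskMap F J c + c x • PS := by
      funext y
      by_cases hy : y = x
      · subst hy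
        simp [maskMap_apply, hx, hPSx]
      · simp [maskMap_apply, hy, hPSne y hy]
    rw [hdecomp]
    exact Submodule.add_mem_sup ⟨c, hc, rfl⟩
      (Submodule.smul_mem _ _ (Submodule.mem_span_singleton_self _))
  calc rho D (insert x J) ≤ Module.finrank F
        ↥(D.map (maskMap F J) ⊔ Submodule.span F {PS}) :=
        Submodule.finrank_mono hle
    _ ≤ rho D J + Module.finrank F ↥(Submodule.span F {PS}) :=
        Submodule.finrank_add_le_finrank_add_finrank _ _
    _ ≤ rho D J + 1 := by rw [finrank_span_singleton hsing]

lemma rho_le_card (J : Finset (Fin N)) : rho D J ≤ J.card := by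
  induction J using Finset.induction_on with
  | empty => simp [rho_empty]
  | insert _ _ ha ih =>
    refine le_trans (rho_insert_le D _ _) ?_
    rw [Finset.card_insert_of_notMem ha]
    omega

lemma rho_union_le (J S : Finset (Fin N)) : rho D (J ∪ S) ≤ rho D J + S.card := by
  induction S using Finset.induction_on with
  | empty => simp
  | insert a S ha ih =>
    rw [Finset.union_insert]
    refine le_trans (rho_insert_le D _ _) ?_
    rw [Finset.card_insert_of_notMem ha]
    omega

lemma rho_insert_of_determined {J S : Finset (Fin N)} {x : Fin N} {μ : Fin N → F}
    (hS : S ⊆ J) (hdet : ∀ c ∈ D, c x = ∑ j ∈ S, μ j * c j) :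
    rho D (insert x J) ≤ rho D J := by
  by_cases hx : x ∈ J
  · rw [Finset.insert_eq_self.mpr hx]
  set PS : Fin N → F := Pi.single x 1 with hPS
  have hPSx : PS x = 1 := by rw [hPS]; simp
  have hPSne : ∀ y, y ≠ x → PS y = 0 := fun y hy => by rw [hPS]; exact Pi.single_eq_of_ne hy 1
  set f : (Fin N → F) →ₗ[F] F := ∑ j ∈ S, μ j • LinearMap.proj j with hf
  have hfv : ∀ v : Fin N → F, f v = ∑ j ∈ S, μ j * v j := by
    intro v
    rw [hf, LinearMap.sum_apply]
    exact Finset.sum_congr rfl fun j _ => rfl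
  set T : (Fin N → F) →ₗ[F] (Fin N → F) :=
    LinearMap.id + f.smulRight (PS) with hT
  have key : D.map (maskMap F (insert x J)) ≤ (D.map (maskMap F J)).map T := by
    rintro _ ⟨c, hc, rfl⟩
    refine ⟨maskMap F J c, ⟨c, hc, rfl⟩, ?_⟩
    have hfc : f (maskMap F J c) = c x := by
      rw [hfv, hdet c hc]
      refine Finset.sum_congr rfl fun j hj => ?_
      rw [maskMap_apply, if_pos (hS hj)]
    funext y
    rw [hT]
    simp only [LinearMap.add_apply, LinearMap.id_apply, LinearMap.smulRight_apply, Pi.add_apply,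
      Pi.smul_apply, smul_eq_mul, hfc]
    by_cases hy : y = x
    · subst hy
      simp [maskMap_apply, hx, hPSx]
    · simp [maskMap_apply, hy, hPSne y hy]
  exact le_trans (Submodule.finrank_mono key) (Submodule.finrank_map_le _ _)

lemma rho_univ : rho D (univ : Finset (Fin N)) = Module.finrank F D := by
  have : maskMap (N := N) F univ = LinearMap.id := by
    refine LinearMap.ext fun c => funext fun x => ?_
    simp
  rw [rho, this, Submodule.map_id]

lemma rho_exists_kernel {J : Finset (Fin N)} (h : rho D J < Module.finrank F D) :
    ∃ c ∈ D, c ≠ 0 ∧ ∀ x ∈ J, c x = 0 := by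
  set g : D →ₗ[F] (Fin N → F) := (maskMap F J).comp D.subtype with hg
  have hrange : LinearMap.range g = D.map (maskMap F J) := by
    rw [hg, LinearMap.range_comp, Submodule.range_subtype]
  have hrank := g.finrank_range_add_finrank_ker
  rw [hrange] at hrank
  have hker : LinearMap.ker g ≠ ⊥ := by
    intro hbot
    rw [hbot] at hrank
    rw [finrank_bot] at hrank
    rw [rho] at h
    omega
  obtain ⟨v, hv, hv0⟩ := Submodule.exists_mem_ne_zero_of_ne_bot hker
  refine ⟨(v : Fin N → F), v.2, ?_, ?_⟩
  · intro h0
    exact hv0 (Subtype.ext h0)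
  · intro x hx
    have := congrFun (LinearMap.mem_ker.mp hv) x
    rw [hg] at this
    simpa [maskMap_apply, hx] using this

lemma rho_between (J G : Finset (Fin N)) (v : ℕ) (h1 : rho D J ≤ v) :
    v ≤ rho D (J ∪ G) → ∃ P ⊆ G, rho D (J ∪ P) = v := by
  induction G using Finset.induction_on with
  | empty =>
    intro h2
    rw [Finset.union_empty] at h2
    exact ⟨∅, Finset.empty_subset _, by rw [Finset.union_empty]; omega⟩
  | insert a G ha ih =>
    intro h2
    by_cases hv : v ≤ rho D (J ∪ G)
    · obtain ⟨P, hP, hPv⟩ := ih hv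
      exact ⟨P, hP.trans (Finset.subset_insert _ _), hPv⟩
    · push_neg at hv
      have e1 : J ∪ insert a G = insert a (J ∪ G) := Finset.union_insert _ _ _
      have h3 := rho_insert_le D (J ∪ G) a
      refine ⟨insert a G, Finset.Subset.refl _, ?_⟩
      rw [e1]
      rw [e1] at h2
      omega

lemma greedy (D : Submodule F (Fin N → F)) (r m k0 : ℕ) (hr1 : 1 ≤ r)
    (hlocD : ∀ x : Fin N, ∃ S : Finset (Fin N), x ∉ S ∧ S.card ≤ r ∧
      ∃ μ : Fin N → F, ∀ c ∈ D, c x = ∑ j ∈ S, μ j * c j)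
    (hD : Module.finrank F D = k0)
    (Hm1 : ∀ s : ℕ, k0 ≤ r * s → m ≤ s + 1)
    (Hm2 : ∀ s : ℕ, k0 + 1 ≤ r * s → m ≤ s) :
    ∀ fuel : ℕ, ∀ J : Finset (Fin N), N ≤ fuel + J.card →
      (r + 1) * rho D J + r + 1 ≤ r * J.card → rho D J + 2 ≤ k0 →
      ∃ J' : Finset (Fin N), rho D J' + 1 ≤ k0 ∧ k0 + m ≤ J'.card + 1 := by
  intro fuel
  induction fuel with
  | zero =>
    intro J hfuel hinv hrho
    have hcard : J.card = Fintype.card (Fin N) := by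
      have := Finset.card_le_univ J
      simp only [Fintype.card_fin] at this ⊢
      omega
    rw [Finset.eq_univ_of_card J hcard, rho_univ, hD] at hrho
    omega
  | succ fuel ih =>
    intro J hfuel hinv hrho
    -- basic facts
    set a := rho D J with ha
    -- `J.card = a + s` for some positive s
    have haJ : a + 1 ≤ J.card := by
      by_contra hcon
      push_neg at hcon
      have h1 : J.card ≤ a := by omega
      have h2 : r * J.card ≤ r * a := Nat.mul_le_mul_left r h1
      have h3 : r * a ≤ (r + 1) * a := Nat.mul_le_mul_right a (by omega)
      omega
    obtain ⟨s, hsum⟩ : ∃ s : ℕ, J.card = a + s := ⟨J.card - a, by omega⟩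
    have hs1 : 1 ≤ s := by omega
    have hrs : a + r + 1 ≤ r * s := by
      have : (r + 1) * a + r + 1 ≤ r * a + r * s := by
        rw [← Nat.mul_add, ← hsum]; exact hinv
      have h4 : (r + 1) * a = r * a + a := by ring
      omega
    -- not everything is covered
    have hJu : J ≠ Finset.univ := by
      intro h
      rw [ha, h, rho_univ, hD] at hrho
      omega
    obtain ⟨x, hx⟩ : ∃ x, x ∉ J := by
      by_contra h
      push_neg at h
      exact hJu (Finset.eq_univ_iff_forall.mpr h)
    obtain ⟨S, hxS, hScard, μ, hμ⟩ := hlocD x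
    set g := (S \ J).card with hg
    have hgr : g ≤ r := le_trans (Finset.card_le_card Finset.sdiff_subset) hScard
    have hJS : J ∪ S = J ∪ (S \ J) := (Finset.union_sdiff_self_eq_union).symm
    have hcardU : (J ∪ S).card = J.card + g := by
      rw [hJS, Finset.card_union_of_disjoint (Finset.disjoint_sdiff)]
    have hrho2 : rho D (J ∪ S) ≤ a + g := by
      rw [hJS]; exact rho_union_le D J (S \ J)
    have hxJS : x ∉ J ∪ S := by
      simp only [Finset.mem_union]
      tauto
    have hdet : rho D (insert x (J ∪ S)) ≤ rho D (J ∪ S) :=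
      rho_insert_of_determined D Finset.subset_union_right hμ
    have hcardI : (insert x (J ∪ S)).card = J.card + g + 1 := by
      rw [Finset.card_insert_of_notMem hxJS, hcardU]
    by_cases hcase : rho D (J ∪ S) + 2 ≤ k0
    · -- Case A : recurse
      refine ih (insert x (J ∪ S)) ?_ ?_ ?_
      · rw [hcardI]; omega
      · rw [hcardI]
        set b := rho D (insert x (J ∪ S)) with hb
        have hbag : b ≤ a + g := le_trans hdet hrho2
        have h1 : (r + 1) * b ≤ (r + 1) * a + ((r * g) + g) := by
          calc (r + 1) * b ≤ (r + 1) * (a + g) := Nat.mul_le_mul_left _ hbag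
            _ = (r + 1) * a + ((r * g) + g) := by ring
        have h2 : r * (J.card + g + 1) = r * J.card + r * g + r := by ring
        omega
      · exact le_trans (by omega : rho D (insert x (J ∪ S)) + 2 ≤ rho D (J ∪ S) + 2) hcase
    · push_neg at hcase
      by_cases hcase2 : rho D (J ∪ S) + 1 ≤ k0
      · -- Case B1 : rho (J ∪ S) = k0 - 1; add the whole group plus x and stop
        refine ⟨insert x (J ∪ S), le_trans (by omega) hcase2, ?_⟩
        -- k0 ≤ rho(J∪S) + 1 ≤ a + g + 1
        have hk0ag : k0 ≤ a + g + 1 := by omega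
        have hrsk : k0 ≤ r * s := by omega
        have hms := Hm1 s hrsk
        rw [hcardI]
        omega
      · -- Case B2 : rho (J ∪ S) ≥ k0; take a partial group
        push_neg at hcase2
        have hk0U : k0 ≤ rho D (J ∪ S) := by omega
        have hbet : k0 - 1 ≤ rho D (J ∪ (S \ J)) := by rw [← hJS]; omega
        obtain ⟨P, hPsub, hPv⟩ := rho_between D J (S \ J) (k0 - 1) (by omega) hbet
        have hPJ : Disjoint J P := by
          refine Finset.disjoint_left.mpr fun z hzJ hzP => ?_
          exact (Finset.mem_sdiff.mp (hPsub hzP)).2 hzJ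
        have hcardP : (J ∪ P).card = J.card + P.card :=
          Finset.card_union_of_disjoint hPJ
        have hPge : k0 - 1 ≤ a + P.card := by
          have := rho_union_le D J P
          omega
        -- rho (J ∪ S) ≤ a + g forces a ≥ k0 - g ≥ k0 - r
        have hak : k0 ≤ a + r := by omega
        have hrsk : k0 + 1 ≤ r * s := by omega
        have hms := Hm2 s hrsk
        refine ⟨J ∪ P, by omega, ?_⟩
        rw [hcardP]
        omega

end LRCAux


open LRCAux in
theorem stmt3 {F : Type*} [Field F] [Fintype F] [DecidableEq F] {n k d r : ℕ}
    (hr : 2 ≤ r) (hk : r + 2 ≤ k)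
    (C : Submodule F (Fin n → F)) (hC : IsLinearCode F C k d)
    (hloc : ∀ i : Fin n, HasLocality F C i r)
    (hd : (d : ℤ) = (n : ℤ) - k + 2 - ⌈(k : ℚ) / (r : ℚ)⌉)
    (i : Fin n) (R : Finset (Fin n)) (lam : Fin n → F)
    (hiR : i ∉ R) (hRcard : R.card = r) (hlam : ∀ j ∈ R, lam j ≠ 0)
    (hrepair : ∀ c ∈ C, c i = ∑ j ∈ R, lam j * c j)
    (hnz : ∃ c ∈ C, c i ≠ 0) :
    (∃ C' : Submodule F (Fin (n - 1) → F), IsLinearCode F C' (k - 1) d ∧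
      ∃ A B : Finset (Fin (n - 1)), Disjoint A B ∧ A ∪ B = Finset.univ ∧
        A.card = r ∧ B.card = n - 1 - r ∧
        (∀ x ∈ A, HasLocality F C' x (r - 1)) ∧
        (∀ x ∈ B, HasLocality F C' x r)) ∧
    (d : ℤ) = ((n : ℤ) - 1) - ((k : ℤ) - 1) + 2 - ⌈(r : ℚ) / (r : ℚ)⌉ -
      ⌈(((k : ℚ) - 1) - ((r : ℚ) - 1)) / (r : ℚ)⌉ := by
  classical
  have hn : 0 < n := i.pos
  obtain ⟨mlen, rfl⟩ : ∃ m', n = m' + 1 := ⟨n - 1, by omega⟩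
  simp only [Nat.add_sub_cancel]
  have hr0 : 0 < r := by omega
  have hrQ : (0:ℚ) < r := by exact_mod_cast hr0
  -- ceiling arithmetic
  set z : ℤ := ⌈(k : ℚ) / (r : ℚ)⌉ with hz
  have hzpos : 0 < z := Int.ceil_pos.mpr (div_pos (by exact_mod_cast (by omega : 0 < k)) hrQ)
  set m := z.toNat with hm
  have hmz : (m : ℤ) = z := Int.toNat_of_nonneg hzpos.le
  have hm1 : 1 ≤ m := by omega
  obtain ⟨m0, hm0⟩ : ∃ m0, m = m0 + 1 := ⟨m - 1, by omega⟩
  have hmk : r * m0 < k := by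
    have hlt : ((m0 : ℤ)) < ⌈(k : ℚ) / (r : ℚ)⌉ := by rw [← hz]; omega
    have h2 : ((m0 : ℤ) : ℚ) < (k : ℚ) / (r : ℚ) := Int.lt_ceil.mp hlt
    have h3 : ((m0 : ℤ) : ℚ) * (r : ℚ) < (k : ℚ) := (lt_div_iff₀ hrQ).mp h2
    have h4 : ((r * m0 : ℕ) : ℚ) < (k : ℚ) := by push_cast at h3 ⊢; linarith
    exact_mod_cast h4
  have Hm1 : ∀ s : ℕ, (k - 1) ≤ r * s → m ≤ s + 1 := by
    intro s hs
    have h5 : r * m0 ≤ r * s := by omega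
    have := Nat.le_of_mul_le_mul_left h5 hr0
    omega
  have Hm2 : ∀ s : ℕ, (k - 1) + 1 ≤ r * s → m ≤ s := by
    intro s hs
    have h5 : r * m0 < r * s := by omega
    have := Nat.lt_of_mul_lt_mul_left h5
    omega
  -- the skipping embedding
  set e : Fin mlen → Fin (mlen + 1) := i.succAbove with he
  have he_inj : Function.Injective e := Fin.succAbove_right_injective
  have he_ne : ∀ y, e y ≠ i := fun y => Fin.succAbove_ne i y
  have he_surj : ∀ j : Fin (mlen + 1), j ≠ i → ∃ y, e y = j := fun j hj =>
    Fin.exists_succAbove_eq hj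
  -- the shortened code (still of full length)
  set D : Submodule F (Fin (mlen + 1) → F) := C ⊓ LinearMap.ker (LinearMap.proj i) with hD
  have hmemD : ∀ c : Fin (mlen + 1) → F, c ∈ D ↔ c ∈ C ∧ c i = 0 := by
    intro c
    rw [hD, Submodule.mem_inf, LinearMap.mem_ker, LinearMap.proj_apply]
  have hDC : D ≤ C := inf_le_left
  -- dimension of D
  obtain ⟨cw, hcwC, hcwi⟩ := hnz
  have hrkC : Module.finrank F C = k := hC.1
  set ψ : C →ₗ[F] F := (LinearMap.proj i).comp C.subtype with hψ
  have hψsurj : LinearMap.range ψ = ⊤ := by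
    rw [LinearMap.range_eq_top]
    intro aval
    refine ⟨⟨(aval * (cw i)⁻¹) • cw, C.smul_mem _ hcwC⟩, ?_⟩
    show ((aval * (cw i)⁻¹) • cw) i = aval
    rw [Pi.smul_apply, smul_eq_mul]
    field_simp
  have hrkD : Module.finrank F D = k - 1 := by
    have h1 := ψ.finrank_range_add_finrank_ker
    rw [hψsurj, finrank_top, Module.finrank_self] at h1
    have hker : LinearMap.ker ψ = Submodule.comap C.subtype (LinearMap.ker (LinearMap.proj i)) := by
      rw [hψ, LinearMap.ker_comp]
    have h2 : D = Submodule.map C.subtype (LinearMap.ker ψ) := by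
      rw [hker, Submodule.map_comap_subtype, hD]
    rw [h2, Submodule.finrank_map_subtype_eq]
    omega
  -- the projected code
  set π : (Fin (mlen + 1) → F) →ₗ[F] (Fin mlen → F) := LinearMap.funLeft F F e with hπ
  have hπ_apply : ∀ (c : Fin (mlen + 1) → F) (y : Fin mlen), π c y = c (e y) := fun c y => rfl
  set C' : Submodule F (Fin mlen → F) := D.map π with hC'
  have hinj0 : ∀ c ∈ D, π c = 0 → c = 0 := by
    intro c hc h0
    funext j
    by_cases hj : j = i
    · rw [hj]; exact ((hmemD c).1 hc).2
    · obtain ⟨y, rfl⟩ := he_surj j hj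
      exact congrFun h0 y
  have hrkC' : Module.finrank F C' = k - 1 := by
    set g : D →ₗ[F] (Fin mlen → F) := π.comp D.subtype with hg
    have hrange : LinearMap.range g = C' := by
      rw [hg, LinearMap.range_comp, Submodule.range_subtype, hC']
    have hkerg : LinearMap.ker g = ⊥ := by
      rw [LinearMap.ker_eq_bot']
      intro v hv
      exact Subtype.ext (hinj0 v v.2 hv)
    have h1 := g.finrank_range_add_finrank_ker
    rw [hrange, hkerg, finrank_bot] at h1
    omega
  -- Hamming weight is preserved
  have hnorm : ∀ c : Fin (mlen + 1) → F, c i = 0 → hammingNorm (π c) = hammingNorm c := by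
    intro c hci
    unfold hammingNorm
    refine Finset.card_bij (fun y _ => e y) ?_ ?_ ?_
    · intro y hy
      simp only [Finset.mem_filter, Finset.mem_univ, true_and, hπ_apply] at hy ⊢
      exact hy
    · intro y1 h1 y2 h2 hq
      exact he_inj hq
    · intro j hj
      simp only [Finset.mem_filter, Finset.mem_univ, true_and] at hj
      have hji : j ≠ i := fun h => hj (by rw [h, hci])
      obtain ⟨y, rfl⟩ := he_surj j hji
      refine ⟨y, ?_, rfl⟩
      simp only [Finset.mem_filter, Finset.mem_univ, true_and, hπ_apply]
      exact hj
  -- minimum distance lower bound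
  have hlow : ∀ c' ∈ C', c' ≠ 0 → d ≤ hammingNorm c' := by
    rintro _ ⟨c, hc, rfl⟩ hne
    have hc0 : c ≠ 0 := fun h => hne (by rw [h, map_zero])
    rw [hnorm c ((hmemD c).1 hc).2]
    exact hC.2.1 c (hDC hc) hc0
  -- locality data transferred to D
  have hlocD : ∀ x : Fin (mlen + 1), ∃ S : Finset (Fin (mlen + 1)), x ∉ S ∧ S.card ≤ r ∧
      ∃ μ : Fin (mlen + 1) → F, ∀ c ∈ D, c x = ∑ j ∈ S, μ j * c j := by
    intro x
    obtain ⟨S, hxS, hcard, μ, hμ⟩ := hloc x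
    exact ⟨S, hxS, hcard, μ, fun c hc => hμ c (hDC hc)⟩
  have hDzero : ∀ c ∈ D, ∑ j ∈ R, lam j * c j = 0 := by
    intro c hc
    rw [← hrepair c (hDC hc)]
    exact ((hmemD c).1 hc).2
  -- solving the local relation for one coordinate
  have hsolve : ∀ c : Fin (mlen + 1) → F, (∑ j ∈ R, lam j * c j) = 0 → ∀ j0 ∈ R,
      c j0 = ∑ j ∈ R.erase j0, (-((lam j0)⁻¹ * lam j)) * c j := by
    intro c hzero j0 hj0
    have hne := hlam j0 hj0
    have hsplit : lam j0 * c j0 + ∑ j ∈ R.erase j0, lam j * c j = 0 := by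
      rw [Finset.add_sum_erase R (fun j => lam j * c j) hj0]
      exact hzero
    have h6 : lam j0 * c j0 = -∑ j ∈ R.erase j0, lam j * c j :=
      eq_neg_of_add_eq_zero_left hsplit
    calc c j0 = (lam j0)⁻¹ * (lam j0 * c j0) := by
          rw [← mul_assoc, inv_mul_cancel₀ hne, one_mul]
      _ = (lam j0)⁻¹ * -∑ j ∈ R.erase j0, lam j * c j := by rw [h6]
      _ = ∑ j ∈ R.erase j0, (-((lam j0)⁻¹ * lam j)) * c j := by
          rw [mul_neg, Finset.mul_sum, ← Finset.sum_neg_distrib]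
          exact Finset.sum_congr rfl fun j _ => by ring
  -- the initial coordinate set
  obtain ⟨j0, hj0R⟩ : ∃ j0, j0 ∈ R := Finset.card_pos.mp (by omega)
  set J0 : Finset (Fin (mlen + 1)) := insert i R with hJ0
  have hJ0card : J0.card = r + 1 := by
    rw [hJ0, Finset.card_insert_of_notMem hiR, hRcard]
  have hrhoJ0 : rho D J0 ≤ r - 1 := by
    have h1 : rho D J0 ≤ rho D R := by
      refine rho_insert_of_determined D (μ := fun _ => 0) (Finset.empty_subset R) ?_
      intro c hc
      rw [Finset.sum_empty]
      exact ((hmemD c).1 hc).2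
    have heq : rho D R = rho D (insert j0 (R.erase j0)) := by
      rw [Finset.insert_erase hj0R]
    have h2 : rho D (insert j0 (R.erase j0)) ≤ rho D (R.erase j0) := by
      refine rho_insert_of_determined D (μ := fun j => -((lam j0)⁻¹ * lam j)) (Finset.Subset.refl _) ?_
      intro c hc
      exact hsolve c (hDzero c hc) j0 hj0R
    have h3 : rho D (R.erase j0) ≤ r - 1 := by
      refine le_trans (rho_le_card D _) ?_
      rw [Finset.card_erase_of_mem hj0R, hRcard]
    omega
  have hINV0 : (r + 1) * rho D J0 + r + 1 ≤ r * J0.card := by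
    rw [hJ0card]
    have h1 : (r + 1) * rho D J0 ≤ (r + 1) * (r - 1) := Nat.mul_le_mul_left _ hrhoJ0
    have h2 : (r + 1) * (r - 1) + (r + 1) = (r + 1) * r := by
      have hq : r - 1 + 1 = r := by omega
      calc (r + 1) * (r - 1) + (r + 1) = (r + 1) * ((r - 1) + 1) := (Nat.mul_succ _ _).symm
        _ = (r + 1) * r := by rw [hq]
    have h3 : (r + 1) * r = r * (r + 1) := Nat.mul_comm _ _
    omega
  -- run the greedy construction
  obtain ⟨J', hJ'rho, hJ'card⟩ := greedy D r m (k - 1) (by omega) hlocD hrkD Hm1 Hm2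
    (mlen + 1) J0 (by omega) hINV0 (by omega)
  -- a minimum weight codeword vanishing at i
  obtain ⟨c0, hc0D, hc0ne, hc0J⟩ := rho_exists_kernel D (J := J') (by rw [hrkD]; omega)
  have hwt_le : hammingNorm c0 + J'.card ≤ mlen + 1 := by
    have hsub : ({j | c0 j ≠ 0} : Finset (Fin (mlen + 1))) ⊆ J'ᶜ := by
      intro j hj
      simp only [Finset.mem_filter, Finset.mem_univ, true_and] at hj
      rw [Finset.mem_compl]
      intro hjJ'
      exact hj (hc0J j hjJ')
    have hcc := Finset.card_le_card hsub
    rw [Finset.card_compl] at hcc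
    simp only [Fintype.card_fin] at hcc
    have hJle : J'.card ≤ mlen + 1 := by
      have := Finset.card_le_univ J'
      simpa using this
    unfold hammingNorm
    omega
  have hdz : (d : ℤ) = (mlen : ℤ) + 1 - k + 2 - m := by
    rw [hd, ← hmz]
    push_cast
    ring
  have hwt : hammingNorm c0 ≤ d := by omega
  have hc0C : c0 ∈ C := hDC hc0D
  have hwd : hammingNorm c0 = d := le_antisymm hwt (hC.2.1 c0 hc0C hc0ne)
  have hc0'ne : π c0 ≠ 0 := fun h => hc0ne (hinj0 c0 hc0D h)
  have hc0'norm : hammingNorm (π c0) = d := by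
    rw [hnorm c0 ((hmemD c0).1 hc0D).2, hwd]
  -- sum transfer between original and shortened coordinates
  have hsum_transfer : ∀ (T : Finset (Fin (mlen + 1))), i ∉ T → ∀ f : Fin (mlen + 1) → F,
      ∑ y ∈ Finset.univ.filter (fun y => e y ∈ T), f (e y) = ∑ j ∈ T, f j := by
    intro T hiT f
    refine Finset.sum_bij (fun y _ => e y) ?_ ?_ ?_ ?_
    · intro y hy
      exact (Finset.mem_filter.mp hy).2
    · intro y1 h1 y2 h2 hq
      exact he_inj hq
    · intro j hj
      have hji : j ≠ i := fun h => hiT (h ▸ hj)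
      obtain ⟨y, rfl⟩ := he_surj j hji
      exact ⟨y, Finset.mem_filter.mpr ⟨Finset.mem_univ y, hj⟩, rfl⟩
    · intro y hy
      rfl
  -- the partition
  set A : Finset (Fin mlen) := Finset.univ.filter (fun y => e y ∈ R) with hA
  set B : Finset (Fin mlen) := Aᶜ with hB
  have hAcard : A.card = r := by
    rw [← hRcard]
    refine Finset.card_bij (fun y _ => e y) ?_ ?_ ?_
    · intro y hy
      exact (Finset.mem_filter.mp hy).2
    · intro y1 h1 y2 h2 hq
      exact he_inj hq
    · intro j hj
      have hji : j ≠ i := fun h => hiR (h ▸ hj)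
      obtain ⟨y, rfl⟩ := he_surj j hji
      exact ⟨y, Finset.mem_filter.mpr ⟨Finset.mem_univ y, hj⟩, rfl⟩
  have hBcard : B.card = mlen - r := by
    rw [hB, Finset.card_compl, hAcard, Fintype.card_fin]
  -- locality of the group coordinates
  have hlocA : ∀ x ∈ A, HasLocality F C' x (r - 1) := by
    intro x hxA
    have hexR : e x ∈ R := (Finset.mem_filter.mp hxA).2
    refine ⟨A.erase x, Finset.notMem_erase x A, ?_,
      fun y => -((lam (e x))⁻¹ * lam (e y)), ?_⟩
    · rw [Finset.card_erase_of_mem hxA, hAcard]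
    · rintro _ ⟨c, hcD, rfl⟩
      have h2 := hsolve c (hDzero c hcD) (e x) hexR
      have hiT : i ∉ R.erase (e x) := fun h => hiR (Finset.mem_of_mem_erase h)
      have h3 := hsum_transfer (R.erase (e x)) hiT (fun j => -((lam (e x))⁻¹ * lam j) * c j)
      have hfe : Finset.univ.filter (fun y => e y ∈ R.erase (e x)) = A.erase x := by
        ext y
        simp only [Finset.mem_filter, Finset.mem_univ, true_and, Finset.mem_erase, hA]
        constructor
        · rintro ⟨h1, h2'⟩
          exact ⟨fun hyx => h1 (by rw [hyx]), h2'⟩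
        · rintro ⟨hyx, hyR⟩
          exact ⟨fun hh => hyx (he_inj hh), hyR⟩
      rw [hfe] at h3
      show π c x = ∑ jj ∈ A.erase x, -((lam (e x))⁻¹ * lam (e jj)) * π c jj
      rw [hπ_apply, h2, ← h3]
      exact Finset.sum_congr rfl fun jj _ => by rw [hπ_apply]
  have hlocB : ∀ x ∈ B, HasLocality F C' x r := by
    intro x _
    obtain ⟨S, hexS, hScard, μ, hμ⟩ := hloc (e x)
    refine ⟨Finset.univ.filter (fun y => e y ∈ S), ?_, ?_, fun y => μ (e y), ?_⟩
    · intro h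
      exact hexS (Finset.mem_filter.mp h).2
    · refine le_trans (Finset.card_le_card_of_injOn (fun y => e y) ?_ he_inj.injOn) hScard
      intro y hy
      exact (Finset.mem_filter.mp hy).2
    · rintro _ ⟨c, hcD, rfl⟩
      have hci : c i = 0 := ((hmemD c).1 hcD).2
      have h2 : c (e x) = ∑ j ∈ S.erase i, μ j * c j := by
        rw [hμ c (hDC hcD)]
        refine (Finset.sum_subset (Finset.erase_subset i S) ?_).symm
        intro j hjS hjne
        have hji : j = i := by
          by_contra hji
          exact hjne (Finset.mem_erase.mpr ⟨hji, hjS⟩)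
        rw [hji, hci, mul_zero]
      have h3 := hsum_transfer (S.erase i) (Finset.notMem_erase i S) (fun j => μ j * c j)
      have hfe : Finset.univ.filter (fun y => e y ∈ S.erase i) =
          Finset.univ.filter (fun y => e y ∈ S) := by
        ext y
        simp only [Finset.mem_filter, Finset.mem_univ, true_and, Finset.mem_erase]
        exact ⟨fun h => h.2, fun h => ⟨he_ne y, h⟩⟩
      rw [hfe] at h3
      show π c x = ∑ jj ∈ Finset.univ.filter (fun y => e y ∈ S), μ (e jj) * π c jj
      rw [hπ_apply, h2, ← h3]
      exact Finset.sum_congr rfl fun jj _ => by rw [hπ_apply]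
  constructor
  · exact ⟨C', ⟨hrkC', hlow, π c0, ⟨c0, hc0D, rfl⟩, hc0'ne, hc0'norm⟩,
      A, B, disjoint_compl_right, Finset.union_compl A, hAcard, hBcard, hlocA, hlocB⟩
  · have hrr : (⌈(r : ℚ) / (r : ℚ)⌉ : ℤ) = 1 := by
      rw [div_self (ne_of_gt hrQ)]
      exact Int.ceil_one
    have hdiv : ((k : ℚ) - 1 - ((r : ℚ) - 1)) / (r : ℚ) = (k : ℚ) / (r : ℚ) - 1 := by
      field_simp
      ring
    have hc2 : ⌈((k : ℚ) - 1 - ((r : ℚ) - 1)) / (r : ℚ)⌉ = ⌈(k : ℚ) / (r : ℚ)⌉ - 1 := by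
      rw [hdiv, Int.ceil_sub_one]
    rw [hrr, hc2, ← hz]
    have hthis := hd
    push_cast at hthis ⊢
    linarith
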